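/- Let α > 0 and let B_α be the Beta distribution function: B_α(x) = 0 for x ≤ −1, B_α(x) = 1 − |x|^α for −1 < x ≤ 0, and B_α(x) = 1 for x > 0. Then for every integer n ≥ 1 and every x ∈ ℝ, max(n·B_α(n^{−1/α}·x) − (n−1), 0) = B_α(x); that is, B_α is freely max-stable with normalizing constants aₙ = n^{−1/α} and bₙ = 0. -/

import Mathlib

open Filter Topology

noncomputable def freePow (F : ℝ → ℝ) (n : ℕ) (x : ℝ) : ℝ :=
  max ((n : ℝ) * F x - ((n : ℝ) - 1)) 0

/-- Type III free extreme value law: the Beta distribution function. -/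
noncomputable def betaDF (α : ℝ) (x : ℝ) : ℝ :=
  if x ≤ -1 then 0 else if x ≤ 0 then 1 - |x| ^ α else 1

/-- The Beta distribution function is freely max-stable with
normalizing constants `aₙ = n^{-1/α}`, `bₙ = 0`. -/
theorem betaDF_freelyMaxStable (α : ℝ) (hα : 0 < α) :
    ∀ n : ℕ, 1 ≤ n → ∀ x : ℝ,
      freePow (betaDF α) n ((n : ℝ) ^ (-(1 / α)) * x + 0) = betaDF α x := by
  intro n hn x
  have hn1 : (1 : ℝ) ≤ (n : ℝ) := by exact_mod_cast hn
  have hn0 : (0 : ℝ) < (n : ℝ) := by linarith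
  set c : ℝ := (n : ℝ) ^ (-(1 / α)) with hc
  have hc0 : 0 < c := Real.rpow_pos_of_pos hn0 _
  have hcα : c ^ α = ((n : ℝ))⁻¹ := by
    rw [hc, ← Real.rpow_mul hn0.le]
    have hexp : -(1 / α) * α = -1 := by field_simp
    rw [hexp, Real.rpow_neg_one]
  have hc1 : c ≤ 1 := by
    rw [hc]
    apply Real.rpow_le_one_of_one_le_of_nonpos hn1
    have : (0:ℝ) < 1 / α := by positivity
    linarith
  have habs : |c * x| ^ α = |x| ^ α / (n : ℝ) := by
    rw [abs_mul, abs_of_pos hc0, Real.mul_rpow hc0.le (abs_nonneg x), hcα]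
    ring
  simp only [freePow, add_zero]
  rcases le_or_gt x (-1) with h1 | h1
  · -- x ≤ -1 : RHS = 0
    have hRHS : betaDF α x = 0 := if_pos h1
    rw [hRHS]
    apply max_eq_right
    have hF : betaDF α (c * x) ≤ 1 - 1 / (n : ℝ) := by
      unfold betaDF
      split_ifs with hA hB
      · have h1n : 1 / (n:ℝ) ≤ 1 := by
          rw [div_le_one hn0]; exact hn1
        linarith
      · rw [habs]
        have hx1 : (1:ℝ) ≤ |x| := by
          rw [abs_of_nonpos (by linarith : x ≤ 0)]; linarith
        have : (1:ℝ) ≤ |x| ^ α := Real.one_le_rpow hx1 hα.le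
        have hdiv : 1 / (n:ℝ) ≤ |x| ^ α / (n:ℝ) := by gcongr
        linarith
      · exfalso
        have : c * x ≤ -c := by nlinarith
        have : c * x < 0 := by linarith
        exact hB this.le
    nlinarith [mul_le_mul_of_nonneg_left hF hn0.le, mul_one_div_cancel hn0.ne']
  rcases le_or_gt x 0 with h0 | h0
  · -- -1 < x ≤ 0
    have hx1 : |x| ≤ 1 := by rw [abs_of_nonpos h0]; linarith
    have hxα : |x| ^ α ≤ 1 := Real.rpow_le_one (abs_nonneg x) hx1 hα.le
    have hcx0 : c * x ≤ 0 := mul_nonpos_of_nonneg_of_nonpos hc0.le h0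
    have hcx1 : ¬ c * x ≤ -1 := by nlinarith
    have hF : betaDF α (c * x) = 1 - |x| ^ α / (n : ℝ) := by
      unfold betaDF
      rw [if_neg hcx1, if_pos hcx0, habs]
    have hRHS : betaDF α x = 1 - |x| ^ α := by
      unfold betaDF
      rw [if_neg (by linarith), if_pos h0]
    rw [hF, hRHS]
    have hval : (n:ℝ) * (1 - |x| ^ α / (n:ℝ)) - ((n:ℝ) - 1) = 1 - |x| ^ α := by
      field_simp
      ring
    rw [hval]
    exact sup_eq_left.mpr (by linarith)
  · -- x > 0
    have hcx : ¬ c * x ≤ 0 := by nlinarith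
    have hF : betaDF α (c * x) = 1 := by
      unfold betaDF
      rw [if_neg (by intro h; exact hcx (by linarith)), if_neg hcx]
    have hRHS : betaDF α x = 1 := by
      unfold betaDF
      rw [if_neg (by linarith), if_neg (by linarith)]
    rw [hF, hRHS]
    simp
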